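/- Let G be a finite tree, let (v₁,v₂) be an edge of G with neither endpoint a leaf, and let G₁, G₂ be the two components of G minus this edge, with vᵢ ∈ Gᵢ. If C₁ is a core of G₁ containing v₁ and C₂ is a core of G₂ containing v₂, then C₁ ∪ C₂ is a core of G. -/

import Mathlib

open scoped Classical

/-- A tree core: `X` induces a connected subgraph and every vertex of `X` has a
neighbor outside `X`. -/
def IsTreeCore {V : Type*} (G : SimpleGraph V) (X : Finset V) : Prop :=
  (G.induce (X : Set V)).Connected ∧ ∀ x ∈ X, ∃ y, y ∉ X ∧ G.Adj x y

/-- `X` is a core of the graph `H` restricted to the vertex set `S`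
(e.g. a connected component of `H`). -/
def IsCoreOn {V : Type*} (H : SimpleGraph V) (S : Set V) (X : Finset V) : Prop :=
  (X : Set V) ⊆ S ∧ (H.induce (X : Set V)).Connected ∧
    ∀ x ∈ X, ∃ y ∈ S, y ∉ X ∧ H.Adj x y

/-- if `v₁v₂` is an edge of a tree `G` with neither endpoint a
leaf, `G₁, G₂` the two components of `G` minus this edge, and `Cᵢ` a core of
`Gᵢ` containing `vᵢ`, then `C₁ ∪ C₂` is a core of `G`. -/
theorem union_cores_isCore {V : Type*} (G : SimpleGraph V) (hG : G.IsTree)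
    (v₁ v₂ : V) (hadj : G.Adj v₁ v₂)
    (h₁ : ∃ u, u ≠ v₂ ∧ G.Adj v₁ u) (h₂ : ∃ u, u ≠ v₁ ∧ G.Adj v₂ u)
    (C₁ C₂ : Finset V)
    (hC₁ : IsCoreOn (G.deleteEdges {s(v₁, v₂)})
      {u | (G.deleteEdges {s(v₁, v₂)}).Reachable v₁ u} C₁)
    (hC₂ : IsCoreOn (G.deleteEdges {s(v₁, v₂)})
      {u | (G.deleteEdges {s(v₁, v₂)}).Reachable v₂ u} C₂)
    (hv₁ : v₁ ∈ C₁) (hv₂ : v₂ ∈ C₂) :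
    IsTreeCore G (C₁ ∪ C₂) := by
  classical
  set G' := G.deleteEdges {s(v₁, v₂)} with hG'def
  obtain ⟨hsub₁, hconn₁, hbd₁⟩ := hC₁
  obtain ⟨hsub₂, hconn₂, hbd₂⟩ := hC₂
  have hle : G' ≤ G := G.deleteEdges_le _
  -- the edge is a bridge
  have hnr : ¬ G'.Reachable v₁ v₂ := by
    have hb := (SimpleGraph.isAcyclic_iff_forall_adj_isBridge.mp hG.IsAcyclic) hadj
    rw [SimpleGraph.isBridge_iff] at hb
    exact hb
  -- the two components are disjoint
  have hdisj : ∀ u, G'.Reachable v₁ u → G'.Reachable v₂ u → False := fun u r₁ r₂ =>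
    hnr (r₁.trans r₂.symm)
  -- homomorphisms into the induced union graph
  let f₁ : G'.induce (C₁ : Set V) →g G.induce ((C₁ ∪ C₂ : Finset V) : Set V) :=
    { toFun := fun x => ⟨x.1, by simp [x.2]⟩
      map_rel' := fun h => hle h }
  let f₂ : G'.induce (C₂ : Set V) →g G.induce ((C₁ ∪ C₂ : Finset V) : Set V) :=
    { toFun := fun x => ⟨x.1, by simp [x.2]⟩
      map_rel' := fun h => hle h }
  constructor
  · -- connectivity
    have hne : Nonempty ((C₁ ∪ C₂ : Finset V) : Set V) :=
      ⟨⟨v₁, by simp [hv₁]⟩⟩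
    rw [SimpleGraph.connected_iff]
    refine ⟨fun x y => ?_, hne⟩
    have key : ∀ z : ((C₁ ∪ C₂ : Finset V) : Set V),
        (G.induce ((C₁ ∪ C₂ : Finset V) : Set V)).Reachable z ⟨v₁, by simp [hv₁]⟩ := by
      rintro ⟨z, hz⟩
      have hz' : z ∈ C₁ ∪ C₂ := hz
      rcases Finset.mem_union.mp hz' with hz1 | hz2
      · have r := hconn₁.preconnected ⟨z, hz1⟩ ⟨v₁, hv₁⟩
        exact r.map f₁
      · have r := (hconn₂.preconnected ⟨z, hz2⟩ ⟨v₂, hv₂⟩).map f₂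
        have e : (G.induce ((C₁ ∪ C₂ : Finset V) : Set V)).Adj
            ⟨v₂, by simp [hv₂]⟩ ⟨v₁, by simp [hv₁]⟩ := hadj.symm
        exact r.trans e.reachable
    exact (key x).trans (key y).symm
  · -- boundary condition
    intro x hx
    rcases Finset.mem_union.mp hx with hx1 | hx2
    · obtain ⟨y, hyS, hyC, hyadj⟩ := hbd₁ x hx1
      refine ⟨y, ?_, hle hyadj⟩
      intro hy
      rcases Finset.mem_union.mp hy with hy1 | hy2
      · exact hyC hy1
      · exact hdisj y hyS (hsub₂ hy2)
    · obtain ⟨y, hyS, hyC, hyadj⟩ := hbd₂ x hx2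
      refine ⟨y, ?_, hle hyadj⟩
      intro hy
      rcases Finset.mem_union.mp hy with hy1 | hy2
      · exact hdisj y (hsub₁ hy1) hyS
      · exact hyC hy2
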